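/- For every positive integer n, C_2(n) := Σ_{k=1}^{n} (−1)^(k−1) · [2n, n−k] · k^2 equals (−1)^n · n(n+1) / (2(2n−3)). -/

import Mathlib

open Finset

/-- Rising factorial `(x)_n = x(x+1)⋯(x+n-1)`. -/
noncomputable def rfact (x : ℝ) : ℕ → ℝ
  | 0 => 1
  | n + 1 => rfact x n * (x + n)

/-- The bracket coefficient `[n, k] = (1/2)_n / ((1/2)_k (1/2)_{n-k})`. -/
noncomputable def brkt (n k : ℕ) : ℝ :=
  rfact (1 / 2) n / (rfact (1 / 2) k * rfact (1 / 2) (n - k))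

lemma rfact_succ (x : ℝ) (m : ℕ) : rfact x (m + 1) = rfact x m * (x + m) := rfl

lemma rfact_half_pos : ∀ m : ℕ, 0 < rfact (1 / 2 : ℝ) m
  | 0 => by norm_num [rfact]
  | m + 1 => by
      rw [rfact_succ]
      exact mul_pos (rfact_half_pos m) (by positivity)

noncomputable def Taux (n k : ℕ) : ℝ :=
  (-1 : ℝ) ^ (k - 1) * rfact (1 / 2) (2 * n) * ((n : ℝ) - k + 1 / 2) *
    ((k : ℝ) * ((k : ℝ) - 1) * (2 * (k : ℝ) + 2 * (n : ℝ) - 1)) /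
    (2 * (2 * (n : ℝ) - 3) * (rfact (1 / 2) (n + 1 - k) * rfact (1 / 2) (n + k)))

lemma two_cast_ne (n : ℕ) : (2 : ℝ) * (n : ℝ) - 3 ≠ 0 := by
  intro h
  have h2 : ((2 * n : ℕ) : ℝ) = ((3 : ℕ) : ℝ) := by push_cast; linarith
  have h3 : 2 * n = 3 := by exact_mod_cast h2
  omega

set_option maxHeartbeats 1000000 in
lemma term_eq (n k : ℕ) (hk1 : 1 ≤ k) (hkn : k ≤ n) :
    (-1 : ℝ) ^ (k - 1) * brkt (2 * n) (n - k) * (k : ℝ) ^ 2 = Taux n k - Taux n (k + 1) := by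
  obtain ⟨m, rfl⟩ : ∃ m, n = k + m := ⟨n - k, by omega⟩
  obtain ⟨l, rfl⟩ : ∃ l, k = l + 1 := ⟨k - 1, by omega⟩
  have e1 : (l + 1 + m) - (l + 1) = m := by omega
  have e2 : l + 1 - 1 = l := by omega
  have e3 : 2 * (l + 1 + m) - m = 2 * l + m + 2 := by omega
  have e4 : (l + 1 + m) + 1 - (l + 1) = m + 1 := by omega
  have e5 : (l + 1 + m) + (l + 1) = 2 * l + m + 2 := by omega
  have e6 : (l + 1 + m) + 1 - (l + 1 + 1) = m := by omega
  have e7 : (l + 1 + m) + (l + 1 + 1) = (2 * l + m + 2) + 1 := by omega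
  have e8 : l + 1 + 1 - 1 = l + 1 := by omega
  rw [Taux, Taux, brkt, e1, e2, e3, e4, e5, e6, e7, e8,
    rfact_succ ((1:ℝ)/2) m, rfact_succ ((1:ℝ)/2) (2*l+m+2)]
  have hP : rfact (1 / 2 : ℝ) (2 * (l + 1 + m)) ≠ 0 := (rfact_half_pos _).ne'
  have hA : rfact (1 / 2 : ℝ) m ≠ 0 := (rfact_half_pos _).ne'
  have hB : rfact (1 / 2 : ℝ) (2 * l + m + 2) ≠ 0 := (rfact_half_pos _).ne'
  have h1 : (1 / 2 : ℝ) + (m : ℝ) ≠ 0 := by positivity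
  have h2 : (1 / 2 : ℝ) + ((2 * l + m + 2 : ℕ) : ℝ) ≠ 0 := by positivity
  have h3 : (2 : ℝ) * ((l + 1 + m : ℕ) : ℝ) - 3 ≠ 0 := two_cast_ne _
  have hpow : (-1 : ℝ) ^ (l + 1) = (-1 : ℝ) ^ l * (-1) := by rw [pow_succ]
  rw [hpow]
  push_cast at h2 h3 ⊢
  set P := rfact (1 / 2 : ℝ) (2 * (l + 1 + m)) with hP'
  set A := rfact (1 / 2 : ℝ) m with hA'
  set B := rfact (1 / 2 : ℝ) (2 * l + m + 2) with hB'
  set x := (l : ℝ) with hx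
  set y := (m : ℝ) with hy
  have h2' : (1 : ℝ) + 2 * (x * 2 + y + 2) ≠ 0 := by positivity
  have h3' : (x + 1 + y) * 2 - 3 ≠ 0 := by contrapose! h3; linarith
  have h1' : (1 : ℝ) + y * 2 ≠ 0 := by positivity
  field_simp [hP, hA, hB, h1, h2, h3, h1', h2', h3']
  ring

theorem C_two_eval (n : ℕ) (hn : 0 < n) :
    ∑ k ∈ Finset.Icc 1 n, (-1 : ℝ) ^ (k - 1) * brkt (2 * n) (n - k) * (k : ℝ) ^ 2 =
      (-1 : ℝ) ^ n * ((n : ℝ) * ((n : ℝ) + 1)) / (2 * (2 * (n : ℝ) - 3)) := by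
  have key : ∀ k ∈ Finset.Icc 1 n,
      (-1 : ℝ) ^ (k - 1) * brkt (2 * n) (n - k) * (k : ℝ) ^ 2 = Taux n k - Taux n (k + 1) := by
    intro k hk
    rw [Finset.mem_Icc] at hk
    exact term_eq n k hk.1 hk.2
  rw [Finset.sum_congr rfl key, ← Finset.Ico_add_one_right_eq_Icc, Finset.sum_Ico_eq_sum_range]
  have hr : n + 1 - 1 = n := by omega
  rw [hr]
  simp only [Nat.add_assoc]
  rw [Finset.sum_range_sub' (fun i => Taux n (1 + i))]
  have hT1 : Taux n 1 = 0 := by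
    rw [Taux]
    norm_num
  have e1 : 1 + n - 1 = n := by omega
  have e2 : n + 1 - (1 + n) = 0 := by omega
  have e3 : n + (1 + n) = 2 * n + 1 := by omega
  rw [hT1, Taux, e1, e2, e3, rfact_succ]
  have hP : rfact (1 / 2 : ℝ) (2 * n) ≠ 0 := (rfact_half_pos _).ne'
  have h3 : (2 : ℝ) * (n : ℝ) - 3 ≠ 0 := two_cast_ne n
  have h4 : (1 / 2 : ℝ) + ((2 * n : ℕ) : ℝ) ≠ 0 := by positivity
  have h0 : rfact (1 / 2 : ℝ) 0 = 1 := rfl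
  rw [h0]
  push_cast at h4 ⊢
  field_simp
  ring
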